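/- Let α > 0, ε > 0, ξ ∈ (0,1), and let h, K satisfy K + h ≥ (2ξ/(αε))^{1/(1−ξ)} and αε/(k+h)^ξ ≤ 1 for all k ≥ K. Define u_K = 0 and u_{k+1} = (1 − αε/(k+h)^ξ) u_k + 1/(k+h)^{2ξ}. Then u_k ≤ (2/(αε)) · 1/(k+h)^ξ for all k ≥ K. -/

import Mathlib

theorem stmt_10 (α ε h : ℝ) (ξ : ℝ) (hα : 0 < α) (hε : 0 < ε) (hh : 1 ≤ h)
    (hξ : ξ ∈ Set.Ioo (0:ℝ) 1)
    (K : ℕ) (hKh : (2 * ξ / (α * ε)) ^ (1 / (1 - ξ)) ≤ (K : ℝ) + h)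
    (hsmall : ∀ k : ℕ, K ≤ k → α * ε / (((k : ℝ) + h) ^ ξ) ≤ 1)
    (u : ℕ → ℝ) (huK : u K = 0)
    (hrec : ∀ k : ℕ, K ≤ k →
      u (k + 1) = (1 - α * ε / (((k : ℝ) + h) ^ ξ)) * u k + 1 / (((k : ℝ) + h) ^ (2 * ξ))) :
    ∀ k : ℕ, K ≤ k → u k ≤ (2 / (α * ε)) * (1 / (((k : ℝ) + h) ^ ξ)) := by
  obtain ⟨hξ0, hξ1⟩ := hξ
  have ha : 0 < α * ε := mul_pos hα hε
  intro k hk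
  induction k, hk using Nat.le_induction with
  | base =>
    rw [huK]
    positivity
  | succ k hk ih =>
    set x : ℝ := (k : ℝ) + h with hx
    have hsm : α * ε / x ^ ξ ≤ 1 := hsmall k hk
    have hrk : u (k + 1) = (1 - α * ε / x ^ ξ) * u k + 1 / x ^ (2 * ξ) := hrec k hk
    have hKx0 : (K : ℝ) ≤ (k : ℝ) := Nat.cast_le.mpr hk
    have hKh' : (2 * ξ / (α * ε)) ^ (1 / (1 - ξ)) ≤ (K : ℝ) + h := hKh
    clear_value x
    have hx1 : 1 ≤ x := by
      have : (0:ℝ) ≤ (k:ℝ) := Nat.cast_nonneg k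
      linarith
    have hx0 : 0 < x := lt_of_lt_of_le one_pos hx1
    have hy0 : 0 < x + 1 := by linarith
    have hxξ : 0 < x ^ ξ := Real.rpow_pos_of_pos hx0 ξ
    have hyξ : 0 < (x + 1) ^ ξ := Real.rpow_pos_of_pos hy0 ξ
    have hcast : ((k + 1 : ℕ) : ℝ) + h = x + 1 := by push_cast; linarith
    have h2 : x ^ (2 * ξ) = x ^ ξ * x ^ ξ := by
      rw [two_mul, Real.rpow_add hx0]
    have hcoef : 0 ≤ 1 - α * ε / x ^ ξ := by linarith
    have step1 : u (k + 1) ≤ (2 / (α * ε)) * (1 / x ^ ξ) - 1 / x ^ (2 * ξ) := by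
      rw [hrk]
      have hb : (1 - α * ε / x ^ ξ) * u k ≤ (1 - α * ε / x ^ ξ) * ((2 / (α * ε)) * (1 / x ^ ξ)) :=
        mul_le_mul_of_nonneg_left ih hcoef
      have heq : (1 - α * ε / x ^ ξ) * ((2 / (α * ε)) * (1 / x ^ ξ)) + 1 / x ^ (2 * ξ)
          = (2 / (α * ε)) * (1 / x ^ ξ) - 1 / x ^ (2 * ξ) := by
        rw [h2]
        field_simp
        ring
      linarith
    -- Bernoulli: ((x+1)/x)^ξ ≤ 1 + ξ/x
    have hbern : ((x + 1) / x) ^ ξ ≤ 1 + ξ / x := by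
      have h1 : (x + 1) / x = 1 + 1 / x := by field_simp
      have h2' : ξ / x = ξ * (1 / x) := by ring
      rw [h1, h2']
      have hxi : (0:ℝ) < 1 / x := by positivity
      exact rpow_one_add_le_one_add_mul_self (by linarith) hξ0.le hξ1.le
    -- hence x^ξ/(x+1)^ξ ≥ 1 - ξ/x
    have hmul : ((x + 1) / x) ^ ξ * (x / (x + 1)) ^ ξ = 1 := by
      rw [← Real.mul_rpow (by positivity) (by positivity)]
      rw [show (x + 1) / x * (x / (x + 1)) = 1 by field_simp]
      exact Real.one_rpow ξ
    have hqpos : 0 < (x / (x + 1)) ^ ξ := Real.rpow_pos_of_pos (by positivity) ξ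
    have hA : 1 - ξ / x ≤ x ^ ξ / (x + 1) ^ ξ := by
      rw [← Real.div_rpow hx0.le hy0.le]
      nlinarith [hbern, hmul, hqpos, Real.rpow_pos_of_pos (show (0:ℝ) < (x+1)/x by positivity) ξ,
        sq_nonneg (ξ / x)]
    -- hB : 2ξ/(αε) ≤ x^(1-ξ)
    have hKx : (2 * ξ / (α * ε)) ^ (1 / (1 - ξ)) ≤ x := by
      linarith
    have hB : 2 * ξ / (α * ε) ≤ x ^ (1 - ξ) := by
      have hne : (1 : ℝ) - ξ ≠ 0 := by linarith
      have h0 : (0:ℝ) ≤ 2 * ξ / (α * ε) := by positivity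
      calc 2 * ξ / (α * ε) = ((2 * ξ / (α * ε)) ^ (1 / (1 - ξ))) ^ (1 - ξ) := by
            rw [← Real.rpow_mul h0, one_div_mul_cancel hne, Real.rpow_one]
        _ ≤ x ^ (1 - ξ) := Real.rpow_le_rpow (Real.rpow_nonneg h0 _) hKx (by linarith)
    have heg : x ^ ξ * x ^ (1 - ξ) = x := by
      rw [← Real.rpow_add hx0]
      norm_num
    -- final combination
    rw [hcast, h2] at *
    set c : ℝ := 2 / (α * ε) with hc
    have hcpos : 0 < c := by positivity
    have hgpos : 0 < x ^ (1 - ξ) := Real.rpow_pos_of_pos hx0 _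
    have h3 : c * ξ / (x * x ^ ξ) ≤ 1 / (x ^ ξ * x ^ ξ) := by
      rw [div_le_div_iff₀ (by positivity) (by positivity)]
      have hb' : c * ξ ≤ x ^ (1 - ξ) := by
        have hce : c * ξ = 2 * ξ / (α * ε) := by rw [hc]; ring
        rw [hce]; exact hB
      have hmm : c * ξ * x ^ ξ ≤ x ^ (1 - ξ) * x ^ ξ := mul_le_mul_of_nonneg_right hb' hxξ.le
      have hx' : x ^ (1 - ξ) * x ^ ξ = x := by rw [mul_comm]; exact heg
      have h7 := mul_le_mul_of_nonneg_right (hmm.trans_eq hx') hxξ.le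
      calc c * ξ * (x ^ ξ * x ^ ξ) = c * ξ * x ^ ξ * x ^ ξ := by ring
        _ ≤ x * x ^ ξ := h7
        _ = 1 * (x * x ^ ξ) := by ring
    have h4 : c / x ^ ξ - c * ξ / (x * x ^ ξ) ≤ c / (x + 1) ^ ξ := by
      have h5 : (1 - ξ / x) / x ^ ξ ≤ 1 / (x + 1) ^ ξ := by
        have : (1 - ξ / x) / x ^ ξ ≤ (x ^ ξ / (x + 1) ^ ξ) / x ^ ξ := by gcongr
        calc (1 - ξ / x) / x ^ ξ ≤ (x ^ ξ / (x + 1) ^ ξ) / x ^ ξ := this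
          _ = 1 / (x + 1) ^ ξ := by field_simp
      have h6 : c * ((1 - ξ / x) / x ^ ξ) ≤ c * (1 / (x + 1) ^ ξ) :=
        mul_le_mul_of_nonneg_left h5 hcpos.le
      have heq2 : c * ((1 - ξ / x) / x ^ ξ) = c / x ^ ξ - c * ξ / (x * x ^ ξ) := by
        field_simp
      rw [heq2, mul_one_div] at h6
      linarith [h6]
    calc u (k + 1) ≤ c * (1 / x ^ ξ) - 1 / (x ^ ξ * x ^ ξ) := step1
      _ ≤ c * (1 / x ^ ξ) - c * ξ / (x * x ^ ξ) := by linarith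
      _ = c / x ^ ξ - c * ξ / (x * x ^ ξ) := by rw [mul_one_div]
      _ ≤ c / (x + 1) ^ ξ := h4
      _ = c * (1 / (x + 1) ^ ξ) := by rw [mul_one_div]
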